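/- Let V be a vector space with a bilinear (magmatic) product *. Then * extends uniquely to a bilinear map T(V) ⊗ T(V) → T(V) on the tensor algebra such that for all f,g,h ∈ T(V) and x,y ∈ V: (i) f*1 = f; (ii) 1*f = ε(f)·1; (iii) x*(fy) = (x*f)*y − x*(f*y); (iv) (fg)*h = Σ (f*h⁽¹⁾)(g*h⁽²⁾), where Δ_⧢(h) = Σ h⁽¹⁾ ⊗ h⁽²⁾ is the deshuffling coproduct. -/

import Mathlib

open scoped TensorProduct
set_option maxHeartbeats 1000000
set_option synthInstance.maxHeartbeats 400000
noncomputable section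

variable (K V : Type*) [Field K] [AddCommGroup V] [Module K V]

/-- The deshuffling coproduct on the tensor algebra: the unique algebra morphism
sending `x : V` to `x ⊗ 1 + 1 ⊗ x`. -/
def deshuffle : TensorAlgebra K V →ₐ[K]
    TensorAlgebra K V ⊗[K] TensorAlgebra K V :=
  TensorAlgebra.lift K
    (((TensorProduct.mk K (TensorAlgebra K V) (TensorAlgebra K V)).flip 1) ∘ₗ TensorAlgebra.ι K
      + (TensorProduct.mk K (TensorAlgebra K V) (TensorAlgebra K V) 1) ∘ₗ TensorAlgebra.ι K)

/-- The counit of the tensor algebra: the algebra morphism killing `V`. -/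
def tensorCounit : TensorAlgebra K V →ₐ[K] K :=
  TensorAlgebra.lift K (0 : V →ₗ[K] K)


/-- convolution algebra carrier -/
def Conv := TensorAlgebra K V →ₗ[K] TensorAlgebra K V

variable {K V}

/-- `star` is the canonical extension to `T(V)` of the magmatic product `m` on `V`:
(i) `f*1 = f`; (ii) `1*f = ε(f)1`; (iii) `x*(fy) = (x*f)*y − x*(f*y)`;
(iv) `(fg)*h = Σ (f*h⁽¹⁾)(g*h⁽²⁾)`, and `star` restricted to `V` is `m`. -/
def IsMagExt (m : V →ₗ[K] V →ₗ[K] V)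
    (star : TensorAlgebra K V →ₗ[K] TensorAlgebra K V →ₗ[K] TensorAlgebra K V) : Prop :=
  (∀ x y : V, star (TensorAlgebra.ι K x) (TensorAlgebra.ι K y) = TensorAlgebra.ι K (m x y)) ∧
  (∀ f, star f 1 = f) ∧
  (∀ f, star 1 f = (tensorCounit K V f) • 1) ∧
  (∀ (x : V) (f : TensorAlgebra K V) (y : V),
    star (TensorAlgebra.ι K x) (f * TensorAlgebra.ι K y)
      = star (star (TensorAlgebra.ι K x) f) (TensorAlgebra.ι K y)
        - star (TensorAlgebra.ι K x) (star f (TensorAlgebra.ι K y))) ∧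
  (∀ f g h, star (f * g) h
      = LinearMap.mul' K (TensorAlgebra K V)
          (TensorProduct.map (star f) (star g) (deshuffle K V h)))

local notation "𝕋" => TensorAlgebra K V
local notation "ιT" => TensorAlgebra.ι K (M := V)
local notation "Δ" => deshuffle K V
local notation "ε" => tensorCounit K V
local notation "μ" => LinearMap.mul' K 𝕋

@[simp] lemma counit_ι (x : V) : tensorCounit K V (ιT x) = 0 := by
  simp [tensorCounit]

@[simp] lemma deshuffle_ι (x : V) :
    deshuffle K V (ιT x) = ιT x ⊗ₜ[K] 1 + 1 ⊗ₜ[K] ιT x := by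
  simp [deshuffle]

namespace MagExt

lemma coassoc (h : 𝕋) :
    (TensorProduct.map (Δ).toLinearMap LinearMap.id) (Δ h)
      = (TensorProduct.assoc K 𝕋 𝕋 𝕋).symm
          ((TensorProduct.map LinearMap.id (Δ).toLinearMap) (Δ h)) := by
  have : (Algebra.TensorProduct.map (Δ) (AlgHom.id K 𝕋)).comp (Δ)
      = ((Algebra.TensorProduct.assoc K K K 𝕋 𝕋 𝕋).symm.toAlgHom).comp
          ((Algebra.TensorProduct.map (AlgHom.id K 𝕋) (Δ)).comp (Δ)) := by
    apply TensorAlgebra.hom_ext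
    apply LinearMap.ext; intro x
    simp [TensorProduct.tmul_add, TensorProduct.add_tmul, Algebra.TensorProduct.one_def,
      Algebra.TensorProduct.assoc_symm_tmul, add_assoc]
  have h2 := congrArg (· h) this
  simp at h2
  exact h2

lemma counit_left (h : 𝕋) :
    (Algebra.TensorProduct.lid K 𝕋)
      ((TensorProduct.map (ε).toLinearMap LinearMap.id) (Δ h)) = h := by
  have : ((Algebra.TensorProduct.lid K 𝕋).toAlgHom.comp
      ((Algebra.TensorProduct.map (ε) (AlgHom.id K 𝕋)).comp (Δ))) = AlgHom.id K 𝕋 := by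
    apply TensorAlgebra.hom_ext
    apply LinearMap.ext; intro x
    simp [TensorProduct.tmul_add, TensorProduct.add_tmul, Algebra.TensorProduct.one_def]
  have h2 := congrArg (· h) this
  simp at h2
  exact h2

lemma counit_right (h : 𝕋) :
    (Algebra.TensorProduct.rid K K 𝕋)
      ((TensorProduct.map LinearMap.id (ε).toLinearMap) (Δ h)) = h := by
  have : ((Algebra.TensorProduct.rid K K 𝕋).toAlgHom.comp
      ((Algebra.TensorProduct.map (AlgHom.id K 𝕋) (ε)).comp (Δ))) = AlgHom.id K 𝕋 := by
    apply TensorAlgebra.hom_ext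
    apply LinearMap.ext; intro x
    simp [TensorProduct.tmul_add, TensorProduct.add_tmul, Algebra.TensorProduct.one_def,
      Algebra.TensorProduct.rid_tmul]
  have h2 := congrArg (· h) this
  simp at h2
  exact h2

end MagExt

namespace Conv

instance : AddCommGroup (Conv K V) := inferInstanceAs (AddCommGroup (𝕋 →ₗ[K] 𝕋))
instance : Module K (Conv K V) := inferInstanceAs (Module K (𝕋 →ₗ[K] 𝕋))

/-- identity on carriers -/
def toL : Conv K V → (𝕋 →ₗ[K] 𝕋) := id

lemma toL_add (a b : Conv K V) : toL (a + b) = toL a + toL b := rfl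
lemma toL_smul (c : K) (a : Conv K V) : toL (c • a) = c • toL a := rfl

instance : One (Conv K V) :=
  ⟨(LinearMap.toSpanSingleton K 𝕋 1) ∘ₗ (ε).toLinearMap⟩

instance : Mul (Conv K V) :=
  ⟨fun φ ψ => μ ∘ₗ TensorProduct.map (toL φ) (toL ψ) ∘ₗ (Δ).toLinearMap⟩

lemma toL_mul (φ ψ : Conv K V) :
    toL (φ * ψ) = μ ∘ₗ TensorProduct.map (toL φ) (toL ψ) ∘ₗ (Δ).toLinearMap := rfl

lemma toL_one : toL (1 : Conv K V) = (LinearMap.toSpanSingleton K 𝕋 1) ∘ₗ (ε).toLinearMap := rfl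

lemma mul_apply' (φ ψ : Conv K V) (h : 𝕋) :
    toL (φ * ψ) h = μ (TensorProduct.map (toL φ) (toL ψ) (Δ h)) := rfl

lemma one_apply' (h : 𝕋) : toL (1 : Conv K V) h = (ε h) • 1 := rfl

private lemma key_assoc (φ ψ χ : 𝕋 →ₗ[K] 𝕋) (u : 𝕋 ⊗[K] (𝕋 ⊗[K] 𝕋)) :
    μ (TensorProduct.map (μ ∘ₗ TensorProduct.map φ ψ) χ
        ((TensorProduct.assoc K 𝕋 𝕋 𝕋).symm u))
      = μ (TensorProduct.map φ (μ ∘ₗ TensorProduct.map ψ χ) u) := by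
  induction u using TensorProduct.induction_on with
  | zero => simp
  | add a b ha hb => simp only [map_add, ha, hb]
  | tmul a t =>
    induction t using TensorProduct.induction_on with
    | zero => simp
    | add s t hs ht =>
      simp only [TensorProduct.tmul_add, map_add, hs, ht]
    | tmul b c => simp [mul_assoc]

private lemma key_one_left (φ : 𝕋 →ₗ[K] 𝕋) (t : 𝕋 ⊗[K] 𝕋) :
    μ (TensorProduct.map ((LinearMap.toSpanSingleton K 𝕋 1) ∘ₗ (ε).toLinearMap) φ t)
      = φ ((Algebra.TensorProduct.lid K 𝕋)
            ((TensorProduct.map (ε).toLinearMap LinearMap.id) t)) := by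
  induction t using TensorProduct.induction_on with
  | zero => simp
  | add a b ha hb => simp only [map_add, ha, hb]
  | tmul a b => simp [Algebra.TensorProduct.lid_tmul, smul_mul_assoc]

private lemma key_one_right (φ : 𝕋 →ₗ[K] 𝕋) (t : 𝕋 ⊗[K] 𝕋) :
    μ (TensorProduct.map φ ((LinearMap.toSpanSingleton K 𝕋 1) ∘ₗ (ε).toLinearMap) t)
      = φ ((Algebra.TensorProduct.rid K K 𝕋)
            ((TensorProduct.map LinearMap.id (ε).toLinearMap) t)) := by
  induction t using TensorProduct.induction_on with
  | zero => simp
  | add a b ha hb => simp only [map_add, ha, hb]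
  | tmul a b => simp [Algebra.TensorProduct.rid_tmul, mul_smul_comm]

instance instRing : Ring (Conv K V) :=
  { (inferInstance : AddCommGroup (Conv K V)) with
    mul := (· * ·)
    one := (1 : Conv K V)
    left_distrib := fun a b c => by
      apply LinearMap.ext; intro h
      show toL (a * (b + c)) h = toL (a * b) h + toL (a * c) h
      simp [mul_apply', toL_add, TensorProduct.map_add_right]
    right_distrib := fun a b c => by
      apply LinearMap.ext; intro h
      show toL ((a + b) * c) h = toL (a * c) h + toL (b * c) h
      simp [mul_apply', toL_add, TensorProduct.map_add_left]
    zero_mul := fun a => by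
      apply LinearMap.ext; intro h
      show toL (0 * a) h = 0
      have h0 : toL (0 : Conv K V) = 0 := rfl
      simp [mul_apply', h0]
    mul_zero := fun a => by
      apply LinearMap.ext; intro h
      have h0 : toL (0 : Conv K V) = 0 := rfl
      show toL (a * 0) h = 0
      simp [mul_apply', h0]
    mul_assoc := fun a b c => by
      apply LinearMap.ext; intro h
      show toL (a * b * c) h = toL (a * (b * c)) h
      rw [mul_apply', mul_apply', toL_mul, toL_mul]
      have e1 : TensorProduct.map (μ ∘ₗ TensorProduct.map (toL a) (toL b) ∘ₗ (Δ).toLinearMap)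
          (toL c) = (TensorProduct.map (μ ∘ₗ TensorProduct.map (toL a) (toL b)) (toL c)) ∘ₗ
            (TensorProduct.map (Δ).toLinearMap LinearMap.id) := by
        rw [← TensorProduct.map_comp]; simp [LinearMap.comp_assoc]
      have e2 : TensorProduct.map (toL a) (μ ∘ₗ TensorProduct.map (toL b) (toL c) ∘ₗ
          (Δ).toLinearMap) = (TensorProduct.map (toL a) (μ ∘ₗ TensorProduct.map (toL b) (toL c)))
            ∘ₗ (TensorProduct.map LinearMap.id (Δ).toLinearMap) := by
        rw [← TensorProduct.map_comp]; simp [LinearMap.comp_assoc]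
      rw [e1, e2]
      simp only [LinearMap.comp_apply]
      rw [MagExt.coassoc, key_assoc]
    one_mul := fun a => by
      apply LinearMap.ext; intro h
      show toL (1 * a) h = toL a h
      rw [mul_apply', toL_one, key_one_left, MagExt.counit_left]
    mul_one := fun a => by
      apply LinearMap.ext; intro h
      show toL (a * 1) h = toL a h
      rw [mul_apply', toL_one, key_one_right, MagExt.counit_right] }

instance instAlgebra : Algebra K (Conv K V) := Algebra.ofModule
  (fun r x y => by
    apply LinearMap.ext; intro h
    show toL (r • x * y) h = r • toL (x * y) h
    rw [mul_apply', mul_apply', toL_smul, TensorProduct.map_smul_left]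
    simp)
  (fun r x y => by
    apply LinearMap.ext; intro h
    show toL (x * r • y) h = r • toL (x * y) h
    rw [mul_apply', mul_apply', toL_smul, TensorProduct.map_smul_right]
    simp)

end Conv


namespace MagExt

variable (m : V →ₗ[K] V →ₗ[K] V)

/-- generator map for the derivation -/
def dGen (y : V) : V →ₗ[K] DualNumber 𝕋 where
  toFun x := TrivSqZeroExt.inl (ιT x) + TrivSqZeroExt.inr (ιT (m x y))
  map_add' a b := by ext <;> simp
  map_smul' c a := by ext <;> simp

def dHom (y : V) : 𝕋 →ₐ[K] DualNumber 𝕋 := TensorAlgebra.lift K (dGen m y)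

lemma fst_dHom (y : V) (f : 𝕋) : (dHom m y f).fst = f := by
  have : (TrivSqZeroExt.fstHom K 𝕋 𝕋).comp (dHom m y) = AlgHom.id K 𝕋 := by
    apply TensorAlgebra.hom_ext
    ext x
    simp [dHom, dGen]
  simpa using congrArg (· f) this

/-- The derivation `D m y` on the tensor algebra extending `x ↦ m x y`. -/
def D (y : V) : 𝕋 →ₗ[K] 𝕋 where
  toFun f := (dHom m y f).snd
  map_add' a b := by simp
  map_smul' c a := by simp

@[simp] lemma D_ι (y x : V) : D m y (ιT x) = ιT (m x y) := by
  simp [D, dHom, dGen]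

@[simp] lemma D_one (y : V) : D m y 1 = 0 := by
  simp [D]

@[simp] lemma D_algebraMap (y : V) (r : K) : D m y (algebraMap K 𝕋 r) = 0 := by
  simp [D, TrivSqZeroExt.algebraMap_eq_inl']

lemma D_mul (y : V) (f g : 𝕋) : D m y (f * g) = f * D m y g + D m y f * g := by
  simp only [D, LinearMap.coe_mk, AddHom.coe_mk, map_mul, TrivSqZeroExt.snd_mul]
  simp [fst_dHom, smul_eq_mul]

lemma D_add (y y' : V) (f : 𝕋) : D m (y + y') f = D m y f + D m y' f := by
  induction f using TensorAlgebra.induction with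
  | algebraMap r => simp
  | ι x => simp
  | mul a b ha hb => simp only [D_mul, ha, hb, mul_add, add_mul]; abel
  | add a b ha hb => simp only [map_add, ha, hb]; abel

lemma D_smul (c : K) (y : V) (f : 𝕋) : D m (c • y) f = c • D m y f := by
  induction f using TensorAlgebra.induction with
  | algebraMap r => simp
  | ι x => simp
  | mul a b ha hb => simp only [D_mul, ha, hb, mul_smul_comm, smul_mul_assoc, smul_add]
  | add a b ha hb => simp only [map_add, ha, hb, smul_add]

@[simp] lemma D_zero_left (f : 𝕋) : D m (0 : V) f = 0 := by
  have := D_smul m (0 : K) (0 : V) f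
  simpa using this

end MagExt

namespace MagExt
variable {κ : Type*} (m : V →ₗ[K] V →ₗ[K] V) (bV : Module.Basis κ K V)
local notation "bT" => Module.Basis.tensorAlgebra bV

lemma bT_eq (w : FreeMonoid κ) :
    bT w = (TensorAlgebra.equivFreeAlgebra bV).symm
      ((FreeAlgebra.equivMonoidAlgebraFreeMonoid (R := K) (X := κ)).symm
        (MonoidAlgebra.of K (FreeMonoid κ) w)) := by
  rw [Module.Basis.tensorAlgebra, Module.Basis.map_apply, FreeAlgebra.basisFreeMonoid, Module.Basis.map_apply]
  simp only [Finsupp.coe_basisSingleOne, MonoidAlgebra.of_apply, LinearEquiv.coe_coe,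
    AlgEquiv.toLinearEquiv_apply]
  rfl

lemma bT_one : bT (1 : FreeMonoid κ) = 1 := by simp [bT_eq, ← MonoidAlgebra.one_def]

lemma bT_mul (w w' : FreeMonoid κ) : bT (w * w') = bT w * bT w' := by
  simp [bT_eq, ← map_mul, MonoidAlgebra.single_mul_single]

lemma bT_of (j : κ) : bT (FreeMonoid.of j) = TensorAlgebra.ι K (bV j) := by
  rw [bT_eq]
  have : (FreeAlgebra.equivMonoidAlgebraFreeMonoid (R := K) (X := κ))
      (FreeAlgebra.ι K j) = MonoidAlgebra.of K (FreeMonoid κ) (FreeMonoid.of j) := by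
    simp [FreeAlgebra.equivMonoidAlgebraFreeMonoid]
  rw [← this]
  simp

/-- span of basis words of length `n` -/
def WS (n : ℕ) : Submodule K 𝕋 :=
  Submodule.span K {g | ∃ w : FreeMonoid κ, w.toList.length = n ∧ bT w = g}

lemma bT_mem_WS (w : FreeMonoid κ) : bT w ∈ WS bV w.toList.length :=
  Submodule.subset_span ⟨w, rfl, rfl⟩

lemma mul_WS (v : V) {n : ℕ} {g : 𝕋} (hg : g ∈ WS bV n) :
    TensorAlgebra.ι K v * g ∈ WS bV (n + 1) := by
  have base : ∀ (i : κ) {g : 𝕋}, g ∈ WS bV n →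
      TensorAlgebra.ι K (bV i) * g ∈ WS bV (n + 1) := by
    intro i g hg
    induction hg using Submodule.span_induction with
    | mem g hgm =>
      obtain ⟨w, hw, rfl⟩ := hgm
      rw [← bT_of, ← bT_mul]
      exact Submodule.subset_span ⟨FreeMonoid.of i * w, by
        simp [FreeMonoid.toList_mul, hw], rfl⟩
    | zero => simp only [mul_zero]; exact zero_mem _
    | add a b _ _ ha hb => rw [mul_add]; exact add_mem ha hb
    | smul c a _ ha => rw [mul_smul_comm]; exact Submodule.smul_mem _ _ ha
  have hv : v ∈ Submodule.span K (Set.range bV) := by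
    rw [Module.Basis.span_eq]; trivial
  induction hv using Submodule.span_induction with
  | mem a ham => obtain ⟨i, rfl⟩ := ham; exact base i hg
  | zero => simp only [map_zero, zero_mul]; exact zero_mem _
  | add a b _ _ ha hb => rw [map_add, add_mul]; exact add_mem ha hb
  | smul c a _ ha => rw [map_smul, smul_mul_assoc]; exact Submodule.smul_mem _ _ ha

lemma D_bT_mem (y : V) (w : FreeMonoid κ) :
    D m y (bT w) ∈ WS bV w.toList.length := by
  induction w using FreeMonoid.recOn with
  | one => rw [bT_one, D_one]; exact zero_mem _
  | of_mul i w ihw =>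
    rw [bT_mul, bT_of, D_mul]
    refine add_mem (mul_WS bV _ ihw) ?_
    rw [D_ι]
    have := mul_WS bV (m (bV i) y) (bT_mem_WS bV w)
    simpa [FreeMonoid.toList_mul] using this

lemma D_WS (y : V) {n : ℕ} {g : 𝕋} (hg : g ∈ WS bV n) : D m y g ∈ WS bV n := by
  induction hg using Submodule.span_induction with
  | mem g hgm => obtain ⟨w, hw, rfl⟩ := hgm; exact hw ▸ D_bT_mem m bV y w
  | zero => simp only [map_zero]; exact zero_mem _
  | add a b _ _ ha hb => rw [map_add]; exact add_mem ha hb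
  | smul c a _ ha => rw [map_smul]; exact Submodule.smul_mem _ _ ha

/-- the recursion table defining the left magmatic multiplication operators -/
def lamTab : ℕ → List κ → (V →ₗ[K] 𝕋)
  | 0, _ => TensorAlgebra.ι K
  | (_+1), [] => TensorAlgebra.ι K
  | (n+1), j :: r' =>
    if (j :: r').length ≤ n then lamTab n (j :: r')
    else
      D m (bV j) ∘ₗ lamTab n r'
        - ((Module.Basis.tensorAlgebra bV).constr K (fun w => lamTab n w.toList.reverse))
            (D m (bV j) (Module.Basis.tensorAlgebra bV (FreeMonoid.ofList r'.reverse)))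

lemma lamTab_nil (n : ℕ) : lamTab m bV n [] = TensorAlgebra.ι K := by
  cases n <;> rw [lamTab]

lemma lamTab_stab (n : ℕ) (r : List κ) (h : r.length ≤ n) :
    lamTab m bV (n+1) r = lamTab m bV n r := by
  cases r with
  | nil => rw [lamTab_nil, lamTab_nil]
  | cons j r' => rw [lamTab, if_pos h]

lemma lamTab_eq (n : ℕ) (r : List κ) (h : r.length ≤ n) :
    lamTab m bV n r = lamTab m bV r.length r := by
  induction n with
  | zero => interval_cases h' : r.length; rfl
  | succ n ih =>
    rcases Nat.lt_or_ge r.length (n+1) with h1 | h1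
    · rw [lamTab_stab m bV n r (Nat.lt_succ_iff.mp h1), ih (Nat.lt_succ_iff.mp h1)]
    · have : r.length = n + 1 := le_antisymm h h1
      rw [this]

/-- the full left-multiplication data, as map `𝕋 →ₗ (V →ₗ 𝕋)` -/
def NN : 𝕋 →ₗ[K] (V →ₗ[K] 𝕋) :=
  (Module.Basis.tensorAlgebra bV).constr K (fun w => lamTab m bV w.toList.length w.toList.reverse)

lemma NN_basis (w : FreeMonoid κ) :
    NN m bV (bT w) = lamTab m bV w.toList.length w.toList.reverse :=
  Module.Basis.constr_basis _ _ _ _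

lemma constr_agree {n k : ℕ} (hk : k ≤ n) {g : 𝕋} (hg : g ∈ WS bV k) :
    ((Module.Basis.tensorAlgebra bV).constr K (fun w => lamTab m bV n w.toList.reverse)) g
      = NN m bV g := by
  induction hg using Submodule.span_induction with
  | mem g hgm =>
    obtain ⟨w, hw, rfl⟩ := hgm
    rw [Module.Basis.constr_basis, NN_basis]
    rw [lamTab_eq m bV n w.toList.reverse (by simpa [hw] using hk),
      lamTab_eq m bV w.toList.length w.toList.reverse (by simp)]
  | zero => simp
  | add a b _ _ ha hb => simp [ha, hb]
  | smul c a _ ha => simp [ha]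

/-- key recursion property, basis version -/
lemma NN_rec_basis (w : FreeMonoid κ) (j : κ) :
    NN m bV (bT w * TensorAlgebra.ι K (bV j))
      = D m (bV j) ∘ₗ NN m bV (bT w) - NN m bV (D m (bV j) (bT w)) := by
  have h1 : bT w * TensorAlgebra.ι K (bV j) = bT (w * FreeMonoid.of j) := by
    rw [bT_mul, bT_of]
  rw [h1, NN_basis]
  have hlen : (w * FreeMonoid.of j).toList.length = w.toList.length + 1 := by
    simp [FreeMonoid.toList_mul]
  have hrev : (w * FreeMonoid.of j).toList.reverse = j :: w.toList.reverse := by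
    simp [FreeMonoid.toList_mul]
  rw [hlen, hrev, lamTab]
  rw [if_neg (by simp)]

  have hofl : FreeMonoid.ofList (w.toList.reverse.reverse) = w := by
    rw [List.reverse_reverse]; exact FreeMonoid.ofList_toList w
  rw [hofl]
  rw [constr_agree m bV (le_refl w.toList.length) (D_bT_mem m bV (bV j) w)]
  rw [NN_basis, lamTab_eq m bV w.toList.length w.toList.reverse (by simp)]

/-- the left multiplication operator `L m bV x = (x * ·)` -/
def L : V →ₗ[K] (𝕋 →ₗ[K] 𝕋) := (NN m bV).flip

lemma L_apply (x : V) (f : 𝕋) : L m bV x f = NN m bV f x := rfl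

lemma L_one (x : V) : L m bV x 1 = TensorAlgebra.ι K x := by
  rw [L_apply, ← bT_one bV, NN_basis]
  simp [bT_one, lamTab]

lemma L_rec (x : V) (f : 𝕋) (y : V) :
    L m bV x (f * TensorAlgebra.ι K y)
      = D m y (L m bV x f) - L m bV x (D m y f) := by
  -- first, basis case in y, all f
  have hbasis : ∀ (j : κ) (f : 𝕋), L m bV x (f * TensorAlgebra.ι K (bV j))
      = D m (bV j) (L m bV x f) - L m bV x (D m (bV j) f) := by
    intro j f
    have : ∀ w : FreeMonoid κ, L m bV x (bT w * TensorAlgebra.ι K (bV j))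
        = D m (bV j) (L m bV x (bT w)) - L m bV x (D m (bV j) (bT w)) := by
      intro w
      have := congrArg (fun (φ : V →ₗ[K] 𝕋) => φ x) (NN_rec_basis m bV w j)
      simpa [L_apply] using this
    -- both sides linear in f
    have hlin : (LinearMap.comp (L m bV x)
          ((LinearMap.mulRight K (TensorAlgebra.ι K (bV j)))))
        = (D m (bV j)) ∘ₗ (L m bV x) - (L m bV x) ∘ₗ (D m (bV j)) := by
      apply Module.Basis.ext (Module.Basis.tensorAlgebra bV)
      intro w
      simpa using this w
    simpa using congrArg (fun (φ : 𝕋 →ₗ[K] 𝕋) => φ f) hlin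
  -- extend to all y by linearity
  have hy : y ∈ Submodule.span K (Set.range bV) := by rw [Module.Basis.span_eq]; trivial
  induction hy using Submodule.span_induction with
  | mem a ham => obtain ⟨i, rfl⟩ := ham; exact hbasis i f
  | zero => simp
  | add a b _ _ ha hb =>
    rw [map_add, mul_add, map_add, ha, hb, D_add, D_add]
    rw [map_add]
    abel
  | smul c a _ ha =>
    rw [map_smul, mul_smul_comm, map_smul, ha, D_smul, D_smul, map_smul]
    rw [smul_sub]

end MagExt

namespace MagExt
variable {κ : Type*} (m : V →ₗ[K] V →ₗ[K] V) (bV : Module.Basis κ K V)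

def LConv : V →ₗ[K] Conv K V where
  toFun x := L m bV x
  map_add' a b := map_add (L m bV) a b
  map_smul' c a := map_smul (L m bV) c a

def starA : 𝕋 →ₐ[K] Conv K V := TensorAlgebra.lift K (LConv m bV)

def star : 𝕋 →ₗ[K] (𝕋 →ₗ[K] 𝕋) where
  toFun f := Conv.toL (starA m bV f)
  map_add' a b := congrArg Conv.toL (map_add (starA m bV) a b)
  map_smul' c a := congrArg Conv.toL (map_smul (starA m bV) c a)

lemma star_apply (f : 𝕋) : star m bV f = Conv.toL (starA m bV f) := rfl

lemma star_ι (x : V) : star m bV (TensorAlgebra.ι K x) = L m bV x := by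
  rw [star_apply, starA, TensorAlgebra.lift_ι_apply]
  rfl

lemma star_mul_left (f g h : 𝕋) :
    star m bV (f * g) h
      = LinearMap.mul' K 𝕋
          (TensorProduct.map (star m bV f) (star m bV g) (deshuffle K V h)) := by
  rw [star_apply, map_mul]
  exact Conv.mul_apply' _ _ _

lemma star_one_left (h : 𝕋) : star m bV 1 h = (tensorCounit K V h) • 1 := by
  rw [star_apply, map_one]
  exact Conv.one_apply' _

lemma star_algebraMap (r : K) (h : 𝕋) :
    star m bV (algebraMap K 𝕋 r) h = r • ((tensorCounit K V h) • 1) := by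
  rw [Algebra.algebraMap_eq_smul_one, map_smul]
  rw [LinearMap.smul_apply, star_one_left]

lemma star_one_right (f : 𝕋) : star m bV f 1 = f := by
  induction f using TensorAlgebra.induction with
  | algebraMap r =>
    rw [star_algebraMap, map_one, one_smul, Algebra.algebraMap_eq_smul_one]
  | ι x => rw [star_ι, L_one]
  | mul a b ha hb =>
    rw [star_mul_left, map_one, Algebra.TensorProduct.one_def, TensorProduct.map_tmul,
      LinearMap.mul'_apply, ha, hb]
  | add a b ha hb => rw [map_add, LinearMap.add_apply, ha, hb]

lemma star_D (g : 𝕋) (y : V) : star m bV g (TensorAlgebra.ι K y) = D m y g := by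
  induction g using TensorAlgebra.induction with
  | algebraMap r => rw [star_algebraMap, counit_ι, zero_smul, smul_zero, D_algebraMap]
  | ι x =>
    rw [star_ι]
    have h1 : TensorAlgebra.ι K (M := V) y = 1 * TensorAlgebra.ι K y := (one_mul _).symm
    rw [h1, L_rec, L_one, D_one, map_zero, sub_zero, D_ι]
  | mul a b ha hb =>
    rw [star_mul_left, deshuffle_ι, map_add, TensorProduct.map_tmul, TensorProduct.map_tmul,
      map_add, LinearMap.mul'_apply, LinearMap.mul'_apply, ha, hb,
      star_one_right, star_one_right, D_mul]
    abel
  | add a b ha hb => rw [map_add, map_add, LinearMap.add_apply, ha, hb]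

lemma star_isMagExt : IsMagExt m (star m bV) := by
  refine ⟨?_, star_one_right m bV, star_one_left m bV, ?_, star_mul_left m bV⟩
  · intro x y
    rw [star_D, D_ι]
  · intro x f y
    rw [star_ι, L_rec, star_D, star_D]

section uniqueness
variable {m}

lemma uniq_D {s : 𝕋 →ₗ[K] 𝕋 →ₗ[K] 𝕋} (hs : IsMagExt m s) (f : 𝕋) (y : V) :
    s f (TensorAlgebra.ι K y) = D m y f := by
  induction f using TensorAlgebra.induction with
  | algebraMap r =>
    rw [Algebra.algebraMap_eq_smul_one, map_smul, LinearMap.smul_apply, hs.2.2.1,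
      counit_ι, zero_smul, smul_zero, (D m y).map_smul, D_one, smul_zero]
  | ι x => rw [hs.1, D_ι]
  | mul a b ha hb =>
    rw [hs.2.2.2.2, deshuffle_ι, map_add, TensorProduct.map_tmul, TensorProduct.map_tmul,
      map_add, LinearMap.mul'_apply, LinearMap.mul'_apply, ha, hb, hs.2.1, hs.2.1, D_mul]
    abel
  | add a b ha hb => rw [map_add, map_add, LinearMap.add_apply, ha, hb]

lemma uniq_ι (bV : Module.Basis κ K V) {s t : 𝕋 →ₗ[K] 𝕋 →ₗ[K] 𝕋} (hs : IsMagExt m s) (ht : IsMagExt m t) (x : V) :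
    s (TensorAlgebra.ι K x) = t (TensorAlgebra.ι K x) := by
  have main : ∀ n (w : FreeMonoid κ), w.toList.length ≤ n →
      s (TensorAlgebra.ι K x) (Module.Basis.tensorAlgebra bV w)
        = t (TensorAlgebra.ι K x) (Module.Basis.tensorAlgebra bV w) := by
    intro n
    induction n with
    | zero =>
      intro w hw
      have hnil : w.toList = [] := List.eq_nil_of_length_eq_zero (Nat.le_zero.mp hw)
      have hw1 : w = 1 := by
        rw [← FreeMonoid.ofList_toList w, hnil]; rfl
      rw [hw1, bT_one, hs.2.1, ht.2.1]
    | succ n ih =>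
      intro w hw
      rcases Nat.lt_succ_iff_lt_or_eq.mp (Nat.lt_succ_of_le hw) with h1 | h1
      · exact ih w (Nat.lt_succ_iff.mp h1)
      · -- w.toList has length n+1, split off the last letter
        rcases List.eq_nil_or_concat w.toList with hnil | ⟨l, j, hl⟩
        · exact absurd h1 (by simp [hnil])
        · have hw' : w = FreeMonoid.ofList l * FreeMonoid.of j := by
            rw [← FreeMonoid.ofList_toList w, hl, List.concat_eq_append]
            rfl
          have h2 := congrArg List.length hl
          rw [h1, List.length_concat] at h2
          have hlen : (FreeMonoid.ofList l).toList.length = n := by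
            show l.length = n
            omega
          have hWS : ∀ g ∈ WS bV n,
              s (TensorAlgebra.ι K x) g = t (TensorAlgebra.ι K x) g := by
            intro g hg
            induction hg using Submodule.span_induction with
            | mem g hgm =>
              obtain ⟨u, hu, rfl⟩ := hgm
              exact ih u (le_of_eq hu)
            | zero => simp
            | add a b _ _ ha hb => rw [map_add, map_add, ha, hb]
            | smul c a _ ha => rw [map_smul, map_smul, ha]
          rw [hw', bT_mul, bT_of]
          rw [hs.2.2.2.1, ht.2.2.2.1]
          rw [uniq_D hs, uniq_D ht, uniq_D hs, uniq_D ht]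
          have e1 : s (TensorAlgebra.ι K x) (Module.Basis.tensorAlgebra bV (FreeMonoid.ofList l))
              = t (TensorAlgebra.ι K x) (Module.Basis.tensorAlgebra bV (FreeMonoid.ofList l)) :=
            ih _ (le_of_eq hlen)
          have e2 : s (TensorAlgebra.ι K x)
                (D m (bV j) (Module.Basis.tensorAlgebra bV (FreeMonoid.ofList l)))
              = t (TensorAlgebra.ι K x)
                (D m (bV j) (Module.Basis.tensorAlgebra bV (FreeMonoid.ofList l))) := by
            apply hWS
            have := D_bT_mem m bV (bV j) (FreeMonoid.ofList l)
            rwa [hlen] at this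
          rw [e1, e2]
  apply Module.Basis.ext (Module.Basis.tensorAlgebra bV)
  intro w
  exact main w.toList.length w le_rfl

lemma magExt_unique (bV : Module.Basis κ K V) {s t : 𝕋 →ₗ[K] 𝕋 →ₗ[K] 𝕋} (hs : IsMagExt m s) (ht : IsMagExt m t) :
    s = t := by
  apply LinearMap.ext
  intro f
  induction f using TensorAlgebra.induction with
  | algebraMap r =>
    apply LinearMap.ext; intro h
    rw [Algebra.algebraMap_eq_smul_one, map_smul, map_smul, LinearMap.smul_apply,
      LinearMap.smul_apply, hs.2.2.1, ht.2.2.1]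
  | ι x => exact uniq_ι bV hs ht x
  | mul a b ha hb =>
    apply LinearMap.ext; intro h
    rw [hs.2.2.2.2, ht.2.2.2.2, ha, hb]
  | add a b ha hb => rw [map_add, map_add, ha, hb]

end uniqueness
end MagExt

/-- any magmatic product on `V` extends uniquely to `T(V)`
satisfying the four axioms. -/
theorem magmatic_product_extends_uniquely (m : V →ₗ[K] V →ₗ[K] V) :
    ∃! star : TensorAlgebra K V →ₗ[K] TensorAlgebra K V →ₗ[K] TensorAlgebra K V,
      IsMagExt m star := by
  classical
  let bV : Module.Basis (Module.Basis.ofVectorSpaceIndex K V) K V := Module.Basis.ofVectorSpace K V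
  exact ⟨MagExt.star m bV, MagExt.star_isMagExt m bV,
    fun s hs => MagExt.magExt_unique bV hs (MagExt.star_isMagExt m bV)⟩

end
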